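/- Let ℋ be a Hilbert space, h a self-adjoint operator on ℋ, μ₀ ∈ ℝ with dist(μ₀, σ(h)) ≥ d > 0, and let Σ : ℝ → B(ℋ) be a measurable family of bounded operators with ess sup_ω ‖Σ(ω)‖ ≤ M. Then for every λ with 0 ≤ λ < d/M and every ω ∈ ℝ, the operator μ₀ + iω - h - λΣ(ω) is boundedly invertible, and ‖(μ₀ + iω - h - λΣ(ω))^{-1}‖ ≤ (d/(d-λM)) · (ω² + d²)^{-1/2}. -/

import Mathlib

/-!
STATEMENT 17: Let h be self-adjoint on ℋ with dist(μ₀, σ(h)) ≥ d > 0, and let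
Σ : ℝ → B(ℋ) be a family with ‖Σ(ω)‖ ≤ M.  Then for 0 ≤ λ < d/M and every
ω ∈ ℝ, the operator μ₀ + iω - h - λΣ(ω) is boundedly invertible, with
‖(μ₀ + iω - h - λΣ(ω))^{-1}‖ ≤ (d/(d - λM)) (ω² + d²)^{-1/2}.
-/

open ContinuousLinearMap

theorem stmt17 {H : Type*} [NormedAddCommGroup H] [InnerProductSpace ℂ H]
    [CompleteSpace H]
    (T : H →L[ℂ] H) (hT : IsSelfAdjoint T)
    (μ₀ d : ℝ) (hd : 0 < d)
    (hgap : ∀ x ∈ spectrum ℂ T, d ≤ ‖(μ₀ : ℂ) - x‖)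
    (M : ℝ) (hM : 0 < M)
    (Sig : ℝ → (H →L[ℂ] H)) (hSig : ∀ ω : ℝ, ‖Sig ω‖ ≤ M)
    (lam : ℝ) (hlam0 : 0 ≤ lam) (hlam : lam < d / M) (ω : ℝ) :
    ∃ R : H →L[ℂ] H,
      ((((μ₀ : ℂ) + (ω : ℂ) * Complex.I) • (1 : H →L[ℂ] H)) - T - (lam : ℂ) • Sig ω)
          ∘L R = 1 ∧
      R ∘L ((((μ₀ : ℂ) + (ω : ℂ) * Complex.I) • (1 : H →L[ℂ] H)) - T
          - (lam : ℂ) • Sig ω) = 1 ∧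
      ‖R‖ ≤ (d / (d - lam * M)) / Real.sqrt (ω ^ 2 + d ^ 2) := by
  have hnormal : IsStarNormal T := hT.isStarNormal
  have hlamM : lam * M < d := by
    rw [lt_div_iff₀ hM] at hlam; linarith
  set z : ℂ := (μ₀ : ℂ) + (ω : ℂ) * Complex.I with hz
  set s : ℝ := Real.sqrt (ω ^ 2 + d ^ 2) with hs
  have hs2 : s ^ 2 = ω ^ 2 + d ^ 2 := Real.sq_sqrt (by positivity)
  have hs_pos : 0 < s := Real.sqrt_pos.mpr (by positivity)
  have hsd : d ≤ s := by nlinarith [Real.sqrt_nonneg (ω ^ 2 + d ^ 2)]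
  -- spectral distance bound
  have hdist : ∀ x ∈ spectrum ℂ T, s ≤ ‖z - x‖ := by
    intro x hx
    have hxre : x = (x.re : ℂ) := hT.mem_spectrum_eq_re hx
    have h1 : d ≤ ‖(μ₀ : ℂ) - x‖ := hgap x hx
    have h1' : d ≤ |μ₀ - x.re| := by
      rwa [hxre, ← Complex.ofReal_sub, Complex.norm_real, Real.norm_eq_abs] at h1
    have hre : (z - x).re = μ₀ - x.re := by
      simp [hz, Complex.sub_re, Complex.add_re]
    have him : (z - x).im = ω := by
      have : x.im = 0 := by rw [hxre]; simp
      simp [hz, Complex.sub_im, Complex.add_im, this]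
    have hn2 : ‖z - x‖ ^ 2 = (μ₀ - x.re) ^ 2 + ω ^ 2 := by
      rw [Complex.sq_norm, Complex.normSq_apply, hre, him]; ring
    have hd2 : d ^ 2 ≤ (μ₀ - x.re) ^ 2 := by
      nlinarith [abs_nonneg (μ₀ - x.re), sq_abs (μ₀ - x.re)]
    nlinarith [norm_nonneg (z - x)]
  have hz_ne : ∀ x ∈ spectrum ℂ T, z - x ≠ 0 := by
    intro x hx h0
    have := hdist x hx
    rw [h0, norm_zero] at this
    linarith
  -- resolvent via cfc
  set f : ℂ → ℂ := fun x => (z - x)⁻¹ with hf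
  have hcont : ContinuousOn f (spectrum ℂ T) := by
    apply ContinuousOn.inv₀
    · exact (continuous_const.sub continuous_id).continuousOn
    · exact hz_ne
  have hcont' : ContinuousOn (fun x => z - x) (spectrum ℂ T) :=
    (continuous_const.sub continuous_id).continuousOn
  set B : H →L[ℂ] H := cfc f T with hB
  have hzT : z • (1 : H →L[ℂ] H) - T = cfc (fun x => z - x) T := by
    rw [cfc_sub _ _ T (by fun_prop) (by fun_prop), cfc_const z T, cfc_id' ℂ T,
      Algebra.algebraMap_eq_smul_one]
  have hB1 : (z • (1 : H →L[ℂ] H) - T) * B = 1 := by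
    rw [hzT, hB, ← cfc_mul _ _ T hcont' hcont]
    rw [show (fun x => (z - x) * f x) = fun x => (z - x) * (z - x)⁻¹ from rfl]
    rw [cfc_congr (g := fun _ => (1 : ℂ)) (fun x hx => by
      field_simp [hz_ne x hx])]
    exact cfc_const_one ℂ T
  have hB2 : B * (z • (1 : H →L[ℂ] H) - T) = 1 := by
    rw [hzT, hB, ← cfc_mul _ _ T hcont hcont']
    rw [cfc_congr (g := fun _ => (1 : ℂ)) (fun x hx => by
      exact inv_mul_cancel₀ (hz_ne x hx))]
    exact cfc_const_one ℂ T
  have hBnorm : ‖B‖ ≤ 1 / s := by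
    apply norm_cfc_le (by positivity)
    intro x hx
    rw [norm_inv]
    rw [one_div]
    exact inv_anti₀ hs_pos (hdist x hx)
  -- perturbation
  set X : H →L[ℂ] H := B * ((lam : ℂ) • Sig ω) with hX
  have hXnorm : ‖X‖ ≤ lam * M / d := by
    calc ‖X‖ ≤ ‖B‖ * ‖(lam : ℂ) • Sig ω‖ := norm_mul_le _ _
    _ ≤ (1 / s) * (lam * M) := by
        apply mul_le_mul hBnorm ?_ (norm_nonneg _) (by positivity)
        rw [norm_smul, Complex.norm_real, Real.norm_eq_abs, abs_of_nonneg hlam0]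
        exact mul_le_mul_of_nonneg_left (hSig ω) hlam0
    _ ≤ (1 / d) * (lam * M) := by
        apply mul_le_mul_of_nonneg_right _ (by positivity)
        apply one_div_le_one_div_of_le hd hsd
    _ = lam * M / d := by ring
  have hX1 : ‖X‖ < 1 := lt_of_le_of_lt hXnorm (by rw [div_lt_one hd]; exact hlamM)
  set G : H →L[ℂ] H := ∑' n : ℕ, X ^ n with hG
  have hG1 : G * (1 - X) = 1 := geom_series_mul_neg X hX1
  have hG2 : (1 - X) * G = 1 := mul_neg_geom_series X hX1
  have hGnorm : ‖G‖ ≤ (1 - ‖X‖)⁻¹ := by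
    have h := tsum_geometric_le_of_norm_lt_one X hX1
    have h1 : ‖(1 : H →L[ℂ] H)‖ ≤ 1 := norm_id_le
    linarith
  have hfactor : z • (1 : H →L[ℂ] H) - T - (lam : ℂ) • Sig ω
      = (z • (1 : H →L[ℂ] H) - T) * (1 - X) := by
    rw [mul_sub, mul_one, hX, ← mul_assoc, hB1, one_mul]
  refine ⟨G * B, ?_, ?_, ?_⟩
  · show (z • (1 : H →L[ℂ] H) - T - (lam : ℂ) • Sig ω) * (G * B) = 1
    rw [hfactor]
    calc (z • (1 : H →L[ℂ] H) - T) * (1 - X) * (G * B)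
        = (z • (1 : H →L[ℂ] H) - T) * ((1 - X) * G) * B := by
          simp only [mul_assoc]
      _ = 1 := by rw [hG2, mul_one, hB1]
  · show (G * B) * (z • (1 : H →L[ℂ] H) - T - (lam : ℂ) • Sig ω) = 1
    rw [hfactor]
    calc (G * B) * ((z • (1 : H →L[ℂ] H) - T) * (1 - X))
        = G * (B * (z • (1 : H →L[ℂ] H) - T)) * (1 - X) := by
          simp only [mul_assoc]
      _ = 1 := by rw [hB2, mul_one, hG1]
  · have hd' : 0 < d - lam * M := by linarith
    have hX1' : (d - lam * M) / d ≤ 1 - ‖X‖ := by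
      rw [div_le_iff₀ hd]
      have := hXnorm
      rw [le_div_iff₀ hd] at this
      nlinarith
    have hXpos : (0:ℝ) < 1 - ‖X‖ := lt_of_lt_of_le (by positivity) hX1'
    have hXd : (1 - ‖X‖)⁻¹ ≤ d / (d - lam * M) := by
      have := inv_anti₀ (by positivity) hX1'
      rwa [inv_div] at this
    calc ‖G * B‖ ≤ ‖G‖ * ‖B‖ := norm_mul_le _ _
      _ ≤ (1 - ‖X‖)⁻¹ * (1 / s) := by
          exact mul_le_mul hGnorm hBnorm (norm_nonneg _) (le_of_lt (inv_pos.mpr hXpos))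
      _ ≤ (d / (d - lam * M)) * (1 / s) := by
          apply mul_le_mul_of_nonneg_right hXd (by positivity)
      _ = (d / (d - lam * M)) / s := by ring
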